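/- Let T be a linear isometry of the complex Banach space c₀ into itself, and let k be an index such that |(T e_k)(j)| < 1/2 for every index j ≠ k. Then |(T e_k)(k)| = 1. -/
import Mathlib


open ZeroAtInfty Filter Topology

/-- `c₀` is modelled as `C₀(ℕ, ℂ)`, the space of sequences of complex numbers tending to `0`
with the supremum norm.  `stdBasis k` is the standard unit vector which is `1` in coordinate `k`
and `0` elsewhere (indices are `0`-based, so `stdBasis (k-1)` is the paper's `e_k`). -/
noncomputable def stdBasis (k : ℕ) : C₀(ℕ, ℂ) :=
  { toFun := fun j => if j = k then 1 else 0
    continuous_toFun := continuous_of_discreteTopology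
    zero_at_infty' := by
      rw [cocompact_eq_atTop]
      refine tendsto_nhds_of_eventually_eq ?_
      filter_upwards [eventually_gt_atTop k] with j hj
      simp [Nat.ne_of_gt hj] }



lemma coord_le_norm (f : C₀(ℕ, ℂ)) (j : ℕ) : ‖f j‖ ≤ ‖f‖ := by
  rw [← ZeroAtInftyContinuousMap.norm_toBCF_eq_norm]
  exact f.toBCF.norm_coe_le_norm j

lemma norm_stdBasis (k : ℕ) : ‖stdBasis k‖ = 1 := by
  apply le_antisymm
  · rw [← ZeroAtInftyContinuousMap.norm_toBCF_eq_norm]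
    refine (BoundedContinuousFunction.norm_le one_pos.le).2 fun j => ?_
    simp only [stdBasis]
    by_cases h : j = k <;> simp [h, stdBasis]
  · have := coord_le_norm (stdBasis k) k
    simpa [stdBasis] using this


/-- If `T` is a linear isometry of `c₀` and `|(T e_k)(j)| < 1/2` for all `j ≠ k`,
then `|(T e_k)(k)| = 1`. -/
theorem c0_isometry_diagonal_coordinate_of_small_off_diagonal
    (T : C₀(ℕ, ℂ) →ₗ[ℂ] C₀(ℕ, ℂ)) (hiso : ∀ x : C₀(ℕ, ℂ), ‖T x‖ = ‖x‖) (k : ℕ)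
    (hsmall : ∀ j : ℕ, j ≠ k → ‖(T (stdBasis k)) j‖ < 1 / 2) :
    ‖(T (stdBasis k)) k‖ = 1 := by
  have hnorm : ‖T (stdBasis k)‖ = 1 := by rw [hiso, norm_stdBasis]
  have hle : ‖(T (stdBasis k)) k‖ ≤ 1 := hnorm ▸ coord_le_norm _ k
  refine le_antisymm hle (le_of_not_gt fun hlt => ?_)
  have : ‖T (stdBasis k)‖ ≤ max ‖(T (stdBasis k)) k‖ (1/2) := by
    rw [← ZeroAtInftyContinuousMap.norm_toBCF_eq_norm]
    refine (BoundedContinuousFunction.norm_le (by positivity)).2 fun j => ?_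
    by_cases h : j = k
    · subst h; exact le_max_left _ _
    · exact le_max_of_le_right (hsmall j h).le
  rw [hnorm] at this
  have : max ‖(T (stdBasis k)) k‖ (1/2 : ℝ) < 1 := max_lt hlt (by norm_num)
  linarith
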